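/- If p : E → B is an arc-hedgehog covering, E is a Peano space, and B has a countable neighborhood basis at b₀, then the fiber p⁻¹(b₀) is a Baire space. -/

import Mathlib

open unitInterval Topology

set_option linter.unnecessarySimpa false

universe u v w

/-- `p : E → B` is an arc-covering: unique lifting of paths given the initial point. -/
def IsArcCovering {E : Type*} {B : Type*} [TopologicalSpace E] [TopologicalSpace B]
    (p : C(E, B)) : Prop :=
  ∀ (e₀ : E) (f : C(I, B)), f 0 = p e₀ →
    ∃! g : C(I, E), p.comp g = f ∧ g 0 = e₀

/-- The relation identifying the wedge points of a wedge of copies of `(A, a₀)` indexed by `S`. -/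
def wedgeRel (S A : Type*) (a₀ : A) (x y : S × A) : Prop :=
  x = y ∨ (x.2 = a₀ ∧ y.2 = a₀)

/-- The wedge (one-point union) of copies of `(A, a₀)` indexed by `S`. -/
def Wedge (S A : Type*) (a₀ : A) : Type _ :=
  Quot (wedgeRel S A a₀)

/-- The topology of a directed wedge: a set is open iff its trace on each copy of `A`
is open, and if it contains the wedge point then it contains all copies of `A`
beyond some index. -/
instance Wedge.instTopologicalSpace (S A : Type*) (a₀ : A) [Preorder S]
    [IsDirected S (· ≤ ·)] [TopologicalSpace A] : TopologicalSpace (Wedge S A a₀) where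
  IsOpen U := (∀ s : S, IsOpen {a : A | Quot.mk (wedgeRel S A a₀) (s, a) ∈ U}) ∧
    ((∃ s : S, Quot.mk (wedgeRel S A a₀) (s, a₀) ∈ U) →
      ∃ t : S, ∀ s : S, t < s → ∀ a : A, Quot.mk (wedgeRel S A a₀) (s, a) ∈ U)
  isOpen_univ := by
    refine ⟨fun s => ?_, fun h => ?_⟩
    · show IsOpen (Set.univ : Set A)
      exact isOpen_univ
    · obtain ⟨s, -⟩ := h
      exact ⟨s, fun _ _ _ => trivial⟩
  isOpen_inter := by
    rintro U V ⟨hU1, hU2⟩ ⟨hV1, hV2⟩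
    refine ⟨fun s => (hU1 s).inter (hV1 s), fun h => ?_⟩
    obtain ⟨tU, htU⟩ := hU2 ⟨h.choose, h.choose_spec.1⟩
    obtain ⟨tV, htV⟩ := hV2 ⟨h.choose, h.choose_spec.2⟩
    obtain ⟨t, ht1, ht2⟩ := directed_of (· ≤ ·) tU tV
    exact ⟨t, fun s hs a => ⟨htU s (lt_of_le_of_lt ht1 hs) a, htV s (lt_of_le_of_lt ht2 hs) a⟩⟩
  isOpen_sUnion := by
    intro C hC
    constructor
    · intro s
      have : {a : A | Quot.mk (wedgeRel S A a₀) (s, a) ∈ ⋃₀ C} =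
          ⋃ U ∈ C, {a : A | Quot.mk (wedgeRel S A a₀) (s, a) ∈ U} := by
        ext a
        simp only [Set.mem_setOf_eq, Set.mem_sUnion, Set.mem_iUnion, exists_prop]
        exact Iff.rfl
      rw [this]
      exact isOpen_biUnion fun U hU => (hC U hU).1 s
    · rintro ⟨s, hs⟩
      obtain ⟨U, hUC, hsU⟩ := hs
      obtain ⟨t, ht⟩ := (hC U hUC).2 ⟨s, hsU⟩
      exact ⟨t, fun s' hs' a => ⟨U, hUC, ht s' hs' a⟩⟩

/-- An arc-hedgehog over a directed set `S`: the directed wedge of copies of `([0,1], 0)`. -/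
def ArcHedgehog (S : Type*) : Type _ := Wedge S I 0

instance (S : Type*) [Preorder S] [IsDirected S (· ≤ ·)] : TopologicalSpace (ArcHedgehog S) :=
  Wedge.instTopologicalSpace S I 0

/-- `p` is an arc-hedgehog covering: maps from arc-hedgehogs lift uniquely. -/
def IsArcHedgehogCovering {E : Type*} {B : Type*} [TopologicalSpace E] [TopologicalSpace B]
    (p : C(E, B)) : Prop :=
  ∀ (S : Type u) [Preorder S] [IsDirected S (· ≤ ·)],
    ∀ (e₀ : E) (f : C(ArcHedgehog S, B)) (z₀ : ArcHedgehog S), f z₀ = p e₀ →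
      ∃! g : C(ArcHedgehog S, E), p.comp g = f ∧ g z₀ = e₀

/-- The closed unit `2`-disk. -/
noncomputable def Disk : Type := Metric.closedBall (0 : EuclideanSpace ℝ (Fin 2)) 1

noncomputable instance : TopologicalSpace Disk := by unfold Disk; infer_instance

/-- The center of the disk. -/
noncomputable def Disk.center : Disk := ⟨0, by simp⟩

/-- A disk-hedgehog over a directed set `S`: the directed wedge of copies of the pointed disk. -/
def DiskHedgehog (S : Type*) : Type _ := Wedge S Disk Disk.center

noncomputable instance (S : Type*) [Preorder S] [IsDirected S (· ≤ ·)] : TopologicalSpace (DiskHedgehog S) :=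
  Wedge.instTopologicalSpace S Disk Disk.center

/-- `p` is a disk-hedgehog covering: maps from disk-hedgehogs lift uniquely. -/
def IsDiskHedgehogCovering {E : Type*} {B : Type*} [TopologicalSpace E] [TopologicalSpace B]
    (p : C(E, B)) : Prop :=
  ∀ (S : Type u) [Preorder S] [IsDirected S (· ≤ ·)],
    ∀ (e₀ : E) (f : C(DiskHedgehog S, B)) (z₀ : DiskHedgehog S), f z₀ = p e₀ →
      ∃! g : C(DiskHedgehog S, E), p.comp g = f ∧ g z₀ = e₀

/-- `p` is a disk-covering: maps from the closed `2`-disk lift uniquely. -/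
def IsDiskCovering {E : Type*} {B : Type*} [TopologicalSpace E] [TopologicalSpace B]
    (p : C(E, B)) : Prop :=
  ∀ (e₀ : E) (f : C(Disk, B)) (d₀ : Disk), f d₀ = p e₀ →
    ∃! g : C(Disk, E), p.comp g = f ∧ g d₀ = e₀

/-- Path components of preimages of neighborhoods form a neighborhood basis of the
total space. -/
def HedgehogBasisCondition {E : Type*} {B : Type*} [TopologicalSpace E] [TopologicalSpace B]
    (p : C(E, B)) : Prop :=
  ∀ (e₀ : E) (U : Set E), IsOpen U → e₀ ∈ U →
    ∃ V ∈ 𝓝 (p e₀), {y : E | JoinedIn (p ⁻¹' V) e₀ y} ⊆ U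

/-- The monodromy relation on loops at `b₀`: two loops are identified iff any two of
their lifts starting at the same point end at the same point. -/
def MonodromyRel {E : Type*} {B : Type*} [TopologicalSpace E] [TopologicalSpace B]
    (p : C(E, B)) (b₀ : B) (α β : Path b₀ b₀) : Prop :=
  ∀ g h : C(I, E), (∀ t, p (g t) = α t) → (∀ t, p (h t) = β t) →
    g 0 = h 0 → g 1 = h 1

/-- `p` is regular: for each loop in `B`, all lifts are loops or all lifts are non-loops. -/
def IsRegularCovering {E : Type*} {B : Type*} [TopologicalSpace E] [TopologicalSpace B]
    (p : C(E, B)) : Prop :=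
  ∀ (b : B) (α : Path b b) (g h : C(I, E)),
    (∀ t, p (g t) = α t) → (∀ t, p (h t) = α t) → g 0 = g 1 → h 0 = h 1



open unitInterval Topology Set Filter

noncomputable section AuxFB

/-- Dependent choice of a sequence. -/
lemma fb_depChoice {α : Type*} (P : ℕ → α → Prop) (R : ℕ → α → α → Prop)
    (h0 : ∃ a, P 0 a) (hs : ∀ n a, P n a → ∃ b, P (n + 1) b ∧ R n a b) :
    ∃ f : ℕ → α, (∀ n, P n (f n)) ∧ ∀ n, R n (f n) (f (n + 1)) := by
  choose g hg1 hg2 using hs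
  let F : ∀ n : ℕ, {a : α // P n a} := fun n =>
    Nat.rec ⟨h0.choose, h0.choose_spec⟩ (fun n x => ⟨g n x.1 x.2, hg1 n x.1 x.2⟩) n
  exact ⟨fun n => (F n).1, fun n => (F n).2, fun n => hg2 n (F n).1 (F n).2⟩

/-- projection onto the unit interval -/
noncomputable def fbProj (x : ℝ) : I := Set.projIcc 0 1 zero_le_one x

@[simp] lemma fbProj_coe (s : I) : fbProj (s : ℝ) = s := by
  simp [fbProj, Set.projIcc_of_mem zero_le_one s.2]

@[simp] lemma fbProj_zero : fbProj 0 = 0 := by simpa using fbProj_coe 0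

@[simp] lemma fbProj_one : fbProj 1 = 1 := by simpa using fbProj_coe 1

variable {β : Type*} [TopologicalSpace β]

/-- infinite concatenation on `[0, ∞)` -/
noncomputable def fbG (α : ℕ → C(I, β)) : ℝ → β :=
  fun x => α ⌊x⌋₊ (fbProj (x - ⌊x⌋₊))

variable {α : ℕ → C(I, β)}

lemma fbG_eqOn_Icc (hmatch : ∀ n, α n 1 = α (n + 1) 0) (n : ℕ) :
    Set.EqOn (fbG α) (fun x => α n (fbProj (x - n))) (Set.Icc (n : ℝ) (n + 1)) := by
  intro x hx
  rcases eq_or_lt_of_le hx.2 with h | h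
  · have hcast : x = ((n + 1 : ℕ) : ℝ) := by push_cast; linarith
    have hfl : ⌊x⌋₊ = n + 1 := by rw [hcast, Nat.floor_natCast]
    have h1 : x - ((n + 1 : ℕ) : ℝ) = 0 := by rw [hcast]; ring
    have h2 : x - (n : ℝ) = 1 := by rw [hcast]; push_cast; ring
    simp only [fbG, hfl]
    push_cast at h1 ⊢
    rw [h1, h2, fbProj_zero, fbProj_one, hmatch n]
  · have hx0 : (0 : ℝ) ≤ x := le_trans (by positivity) hx.1
    have hfl : ⌊x⌋₊ = n := by
      rw [Nat.floor_eq_iff hx0]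
      exact ⟨hx.1, by push_cast; linarith⟩
    simp [fbG, hfl]

lemma fbG_eqOn_Iic (hmatch : ∀ n, α n 1 = α (n + 1) 0) :
    Set.EqOn (fbG α) (fun x => α 0 (fbProj x)) (Set.Iic (1 : ℝ)) := by
  intro x hx
  rcases le_or_gt x 0 with h | h
  · have hfl : ⌊x⌋₊ = 0 := Nat.floor_eq_zero.mpr (lt_of_le_of_lt h one_pos)
    have hp : fbProj x = 0 := by
      rw [fbProj, Set.projIcc_of_le_left zero_le_one h]
      rfl
    simp [fbG, hfl, hp]
  · have := fbG_eqOn_Icc hmatch 0 (show x ∈ Set.Icc ((0 : ℕ) : ℝ) (((0 : ℕ) : ℝ) + 1) by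
      refine ⟨by simpa using le_of_lt h, by simpa using hx⟩)
    simpa using this

lemma fbG_continuous (hmatch : ∀ n, α n 1 = α (n + 1) 0) : Continuous (fbG α) := by
  rw [continuous_iff_continuousAt]
  intro x
  rcases lt_or_ge x 1 with hx | hx
  · refine ContinuousAt.congr (f := fun y => α 0 (fbProj y))
      (((α 0).continuous.comp continuous_projIcc).continuousAt) ?_
    filter_upwards [Iio_mem_nhds hx] with y hy
    exact (fbG_eqOn_Iic hmatch (Set.mem_Iic.mpr (le_of_lt hy))).symm
  · have hx0 : (0 : ℝ) ≤ x := le_trans zero_le_one hx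
    have h1 : (⌊x⌋₊ : ℝ) ≤ x := Nat.floor_le hx0
    have h2 : x < ⌊x⌋₊ + 1 := Nat.lt_floor_add_one x
    rcases eq_or_lt_of_le h1 with he | he
    · -- x is a positive integer
      have hn1 : 1 ≤ ⌊x⌋₊ := Nat.le_floor (by exact_mod_cast hx)
      obtain ⟨m, hm⟩ : ∃ m, ⌊x⌋₊ = m + 1 := ⟨⌊x⌋₊ - 1, (Nat.succ_pred_eq_of_pos hn1).symm⟩
      have hxx : x = (m : ℝ) + 1 := by rw [← he, hm]; push_cast; ring
      have hIic : ContinuousWithinAt (fbG α) (Set.Iic x) x := by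
        refine ContinuousWithinAt.congr_of_eventuallyEq
          (f := fun y => α m (fbProj (y - m)))
          (((α m).continuous.comp (continuous_projIcc.comp
            (continuous_sub_right _))).continuousWithinAt) ?_ ?_
        · have hmem : Set.Icc ((m : ℝ)) (m + 1) ∈ 𝓝[Set.Iic x] x := by
            rw [mem_nhdsWithin]
            exact ⟨Set.Ioi (m : ℝ), isOpen_Ioi, by rw [hxx]; simp,
              fun y hy => ⟨le_of_lt hy.1, hxx ▸ hy.2⟩⟩
          filter_upwards [hmem] with y hy
          exact fbG_eqOn_Icc hmatch m hy
        · exact fbG_eqOn_Icc hmatch m ⟨by rw [hxx]; linarith, le_of_eq hxx⟩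
      have hIci : ContinuousWithinAt (fbG α) (Set.Ici x) x := by
        refine ContinuousWithinAt.congr_of_eventuallyEq
          (f := fun y => α (m + 1) (fbProj (y - (m + 1 : ℕ))))
          (((α (m + 1)).continuous.comp (continuous_projIcc.comp
            (continuous_sub_right _))).continuousWithinAt) ?_ ?_
        · have hmem : Set.Icc ((m : ℝ) + 1) (m + 2) ∈ 𝓝[Set.Ici x] x := by
            rw [mem_nhdsWithin]
            exact ⟨Set.Iio ((m : ℝ) + 2), isOpen_Iio, by rw [hxx]; norm_num,
              fun y hy => ⟨hxx ▸ hy.2, le_of_lt hy.1⟩⟩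
          filter_upwards [hmem] with y hy
          have := fbG_eqOn_Icc hmatch (m + 1) (by push_cast; convert hy using 2; ring)
          simpa using this
        · have := fbG_eqOn_Icc hmatch (m + 1)
            (show x ∈ Set.Icc (((m + 1 : ℕ)) : ℝ) ((m + 1 : ℕ) + 1) by
              constructor <;> push_cast <;> rw [hxx] <;> linarith)
          simpa using this
      have := hIic.union hIci
      rwa [Set.Iic_union_Ici, continuousWithinAt_univ] at this
    · refine ContinuousAt.congr (f := fun y => α ⌊x⌋₊ (fbProj (y - ⌊x⌋₊)))
        (((α ⌊x⌋₊).continuous.comp (continuous_projIcc.comp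
        (continuous_sub_right _))).continuousAt) ?_
      filter_upwards [Ioo_mem_nhds he h2] with y hy
      exact (fbG_eqOn_Icc hmatch ⌊x⌋₊ ⟨le_of_lt hy.1, le_of_lt hy.2⟩).symm


/-- time grid point n/(n+1) -/
noncomputable def fbT (n : ℕ) : I :=
  ⟨(n : ℝ) / (n + 1), by positivity, by rw [div_le_one (by positivity)]; linarith⟩

@[simp] lemma fbT_coe (n : ℕ) : (fbT n : ℝ) = (n : ℝ) / (n + 1) := rfl

@[simp] lemma fbT_zero : fbT 0 = 0 := by ext; simp

lemma fbScale_mem (n : ℕ) (s : I) : ((n : ℝ) + s) / ((n : ℝ) + s + 1) ∈ I := by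
  have h0 : (0 : ℝ) ≤ s := s.2.1
  constructor
  · positivity
  · rw [div_le_one (by positivity)]; linarith

/-- the scaling map sending `I` to `[fbT n, fbT (n+1)]` -/
noncomputable def fbScale (n : ℕ) : C(I, I) where
  toFun s := ⟨((n : ℝ) + s) / ((n : ℝ) + s + 1), fbScale_mem n s⟩
  continuous_toFun := by
    apply Continuous.subtype_mk
    apply Continuous.div (by fun_prop) (by fun_prop)
    intro s
    have h0 : (0 : ℝ) ≤ s := s.2.1
    positivity

@[simp] lemma fbScale_coe (n : ℕ) (s : I) :
    ((fbScale n s : I) : ℝ) = ((n : ℝ) + s) / ((n : ℝ) + s + 1) := rfl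

lemma fbScale_zero (n : ℕ) : fbScale n 0 = fbT n := by
  ext; simp

lemma fbScale_one (n : ℕ) : fbScale n 1 = fbT (n + 1) := by
  ext
  rw [fbScale_coe, fbT_coe]
  push_cast
  norm_num

/-- the clamping path map from `fbT n` to `1` -/
noncomputable def fbClamp (n : ℕ) : C(I, I) where
  toFun s := ⟨(fbT n : ℝ) + s * (1 - (fbT n : ℝ)), by
    have h0 : (0 : ℝ) ≤ s := s.2.1
    have h1 : (s : ℝ) ≤ 1 := s.2.2
    have h2 : (0 : ℝ) ≤ (fbT n : ℝ) := (fbT n).2.1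
    have h3 : (fbT n : ℝ) ≤ 1 := (fbT n).2.2
    constructor
    · nlinarith
    · nlinarith⟩
  continuous_toFun := by fun_prop

lemma fbClamp_coe (n : ℕ) (s : I) :
    ((fbClamp n s : I) : ℝ) = (fbT n : ℝ) + s * (1 - (fbT n : ℝ)) := rfl

lemma fbClamp_ge (n : ℕ) (s : I) : (fbT n : ℝ) ≤ (fbClamp n s : I) := by
  have h0 : (0 : ℝ) ≤ s := s.2.1
  have h3 : (fbT n : ℝ) ≤ 1 := (fbT n).2.2
  rw [fbClamp_coe]; nlinarith

lemma fbClamp_zero (n : ℕ) : fbClamp n 0 = fbT n := by ext; simp [fbClamp_coe]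

lemma fbClamp_one (n : ℕ) : fbClamp n 1 = 1 := by ext; simp [fbClamp_coe]

/-- the infinite concatenation, reparametrized to `[0,1]` -/
noncomputable def fbH (b₀ : β) (α : ℕ → C(I, β)) : ℝ → β :=
  fun t => if t < 1 then fbG α (t / (1 - t)) else b₀

variable {b₀ : β}

lemma fb_ratio_ge {n : ℕ} {t : ℝ} (h1 : (n : ℝ) / (n + 1) ≤ t) (h2 : t < 1) :
    (n : ℝ) ≤ t / (1 - t) := by
  rw [le_div_iff₀ (by linarith)]
  rw [div_le_iff₀ (by positivity)] at h1
  nlinarith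

lemma fbG_tail {V : ℕ → Set β} (hV : ∀ m, ∀ s : I, α m s ∈ V m)
    (hanti : ∀ m k, m ≤ k → V k ⊆ V m) (n : ℕ) (x : ℝ) (hx : (n : ℝ) ≤ x) :
    fbG α x ∈ V n :=
  hanti n ⌊x⌋₊ (Nat.le_floor hx) (hV _ _)

lemma fbH_tail {V : ℕ → Set β} (hV : ∀ m, ∀ s : I, α m s ∈ V m)
    (hanti : ∀ m k, m ≤ k → V k ⊆ V m) (n : ℕ) (hb : b₀ ∈ V n)
    (t : ℝ) (ht : (fbT n : ℝ) ≤ t) : fbH b₀ α t ∈ V n := by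
  rw [fbH]
  split_ifs with h
  · exact fbG_tail hV hanti n _ (fb_ratio_ge ht h)
  · exact hb

lemma fbH_scale (hmatch : ∀ n, α n 1 = α (n + 1) 0) (n : ℕ) (s : I) :
    fbH b₀ α ((fbScale n s : I) : ℝ) = α n s := by
  have h0 : (0 : ℝ) ≤ s := s.2.1
  have h1 : (s : ℝ) ≤ 1 := s.2.2
  have hlt : ((fbScale n s : I) : ℝ) < 1 := by
    rw [fbScale_coe, div_lt_one (by positivity)]; linarith
  rw [fbH, if_pos hlt, fbScale_coe]
  have hratio : ((n : ℝ) + s) / ((n : ℝ) + s + 1) / (1 - ((n : ℝ) + s) / ((n : ℝ) + s + 1))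
      = (n : ℝ) + s := by
    have hne : ((n : ℝ) + s + 1) ≠ 0 := by positivity
    field_simp
    ring
  rw [hratio]
  have hmem : (n : ℝ) + s ∈ Set.Icc ((n : ℝ)) ((n : ℝ) + 1) := ⟨by linarith, by linarith⟩
  rw [fbG_eqOn_Icc hmatch n hmem]
  simp

lemma fbH_one_eq (t : ℝ) (ht : 1 ≤ t) : fbH b₀ α t = b₀ := by
  rw [fbH, if_neg (not_lt.mpr ht)]

lemma fbH_continuous (hmatch : ∀ n, α n 1 = α (n + 1) 0)
    (hsmall : ∀ W ∈ 𝓝 b₀, ∃ n : ℕ, ∀ x : ℝ, (n : ℝ) ≤ x → fbG α x ∈ W) :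
    Continuous (fbH b₀ α) := by
  rw [continuous_iff_continuousAt]
  intro t
  rcases lt_trichotomy t 1 with ht | ht | ht
  · have hcont : ContinuousAt (fun u : ℝ => fbG α (u / (1 - u))) t := by
      apply (fbG_continuous hmatch).continuousAt.comp
      exact ContinuousAt.div continuousAt_id (by fun_prop)
        (sub_ne_zero.mpr (ne_of_lt ht).symm)
    refine ContinuousAt.congr hcont ?_
    filter_upwards [Iio_mem_nhds ht] with u hu
    show fbG α (u / (1 - u)) = fbH b₀ α u
    rw [fbH, if_pos (Set.mem_Iio.mp hu)]
  · have hH1 : fbH b₀ α t = b₀ := fbH_one_eq t (le_of_eq ht.symm)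
    rw [ContinuousAt, hH1, tendsto_def]
    intro W hW
    obtain ⟨n, hn⟩ := hsmall W hW
    have hb : b₀ ∈ W := mem_of_mem_nhds hW
    have hmem : Set.Ioi ((n : ℝ) / (n + 1)) ∈ 𝓝 t := Ioi_mem_nhds (by
      rw [ht, div_lt_one (by positivity)]; linarith)
    apply mem_of_superset hmem
    intro u hu
    rw [Set.mem_preimage, fbH]
    split_ifs with h
    · exact hn _ (fb_ratio_ge (le_of_lt hu) h)
    · exact hb
  · refine ContinuousAt.congr (f := fun _ => b₀) continuousAt_const ?_
    filter_upwards [Ioi_mem_nhds ht] with u hu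
    exact (fbH_one_eq u (le_of_lt hu)).symm

end AuxFB


/-- the fiber of an arc-hedgehog covering with Peano total space over a
point with a countable neighborhood basis is a Baire space. -/
theorem fiber_baire {E B : Type*} [TopologicalSpace E] [TopologicalSpace B]
    [ConnectedSpace E] [LocallyPathConnectedSpace E]
    (p : C(E, B)) (hp : IsArcCovering p) (hbasis : HedgehogBasisCondition p)
    (b₀ : B) (hcount : (nhds b₀).IsCountablyGenerated) :
    BaireSpace ↥(p ⁻¹' {b₀}) := by
  constructor
  intro f hfo hfd
  rw [dense_iff_inter_open]
  rintro U hUo ⟨x₀, hx₀U⟩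
  classical
  obtain ⟨U', hU'o, hU'⟩ := isOpen_induced_iff.mp hUo
  have hUt : ∀ n, ∃ t, IsOpen t ∧ Subtype.val ⁻¹' t = f n := fun n =>
    isOpen_induced_iff.mp (hfo n)
  choose Ut hUto hUteq using hUt
  set T : ℕ → Set E := fun n => Nat.rec (motive := fun _ => Set E) U' (fun k _ => Ut k) n with hT
  have hT0 : T 0 = U' := rfl
  have hTs : ∀ n, T (n + 1) = Ut n := fun n => rfl
  obtain ⟨Bas, hBas⟩ := (𝓝 b₀).exists_antitone_basis
  have hBasmem : ∀ n, Bas n ∈ 𝓝 b₀ := fun n => hBas.toHasBasis.mem_of_mem trivial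
  set P : ℕ → E × Set B → Prop := fun n x =>
    p x.1 = b₀ ∧ IsOpen x.2 ∧ x.2 ∈ 𝓝 b₀ ∧ x.2 ⊆ Bas n ∧
      (∀ y : E, p y = b₀ → JoinedIn (p ⁻¹' x.2) x.1 y → y ∈ T n) with hPdef
  set R : ℕ → E × Set B → E × Set B → Prop := fun _ x x' =>
    JoinedIn (p ⁻¹' x.2) x.1 x'.1 ∧ x'.2 ⊆ x.2 with hRdef
  have hx₀fiber : p (x₀ : E) = b₀ := x₀.2
  have hbase : ∃ x : E × Set B, P 0 x := by
    have hx₀U' : (x₀ : E) ∈ U' := by rw [← hU'] at hx₀U; exact hx₀U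
    obtain ⟨V, hV, hball⟩ := hbasis (x₀ : E) U' hU'o hx₀U'
    rw [hx₀fiber] at hV
    refine ⟨((x₀ : E), interior (V ∩ Bas 0)), hx₀fiber, isOpen_interior,
      interior_mem_nhds.mpr (Filter.inter_mem hV (hBasmem 0)),
      interior_subset.trans Set.inter_subset_right, ?_⟩
    intro y _ hJ
    exact hball (hJ.mono (Set.preimage_mono
      (interior_subset.trans Set.inter_subset_left)))
  have hstep : ∀ n x, P n x → ∃ x', P (n + 1) x' ∧ R n x x' := by
    rintro n ⟨e, V⟩ ⟨he, hVo, hVnh, _, _⟩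
    have hpV : IsOpen (p ⁻¹' V) := hVo.preimage p.continuous
    have heV : e ∈ p ⁻¹' V := by
      rw [Set.mem_preimage, he]; exact mem_of_mem_nhds hVnh
    have hCo : IsOpen (pathComponentIn (p ⁻¹' V) e) := hpV.pathComponentIn e
    have hsubo : IsOpen (Subtype.val ⁻¹' pathComponentIn (p ⁻¹' V) e : Set ↥(p ⁻¹' {b₀})) :=
      hCo.preimage continuous_subtype_val
    have hne : (Subtype.val ⁻¹' pathComponentIn (p ⁻¹' V) e : Set ↥(p ⁻¹' {b₀})).Nonempty :=
      ⟨⟨e, by simp [he]⟩, mem_pathComponentIn_self heV⟩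
    obtain ⟨y, hy1, hy2⟩ := (hfd n).inter_open_nonempty _ hsubo hne
    have hyb : p (y : E) = b₀ := y.2
    have hyUt : (y : E) ∈ Ut n := by rw [← hUteq n] at hy2; exact hy2
    obtain ⟨V₁, hV₁, hball₁⟩ := hbasis (y : E) (Ut n) (hUto n) hyUt
    rw [hyb] at hV₁
    refine ⟨((y : E), interior (V₁ ∩ V ∩ Bas (n + 1))), ⟨hyb, isOpen_interior,
      interior_mem_nhds.mpr (Filter.inter_mem (Filter.inter_mem hV₁ hVnh) (hBasmem (n + 1))),
      interior_subset.trans Set.inter_subset_right, ?_⟩, hy1, ?_⟩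
    · intro z _ hJ
      rw [hTs]
      exact hball₁ (hJ.mono (Set.preimage_mono fun w hw => (interior_subset hw).1.1))
    · exact interior_subset.trans fun w hw => hw.1.2
  obtain ⟨seq, hPseq, hRseq⟩ := fb_depChoice P R hbase hstep
  set e : ℕ → E := fun n => (seq n).1 with he
  set V : ℕ → Set B := fun n => (seq n).2 with hV
  have heb : ∀ n, p (e n) = b₀ := fun n => (hPseq n).1
  have hVnh : ∀ n, V n ∈ 𝓝 b₀ := fun n => (hPseq n).2.2.1
  have hVBas : ∀ n, V n ⊆ Bas n := fun n => (hPseq n).2.2.2.1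
  have hballs : ∀ n, ∀ y, p y = b₀ → JoinedIn (p ⁻¹' V n) (e n) y → y ∈ T n :=
    fun n => (hPseq n).2.2.2.2
  have hJn : ∀ n, JoinedIn (p ⁻¹' V n) (e n) (e (n + 1)) := fun n => (hRseq n).1
  have hanti : ∀ m k, m ≤ k → V k ⊆ V m := by
    intro m k hmk
    induction k, hmk using Nat.le_induction with
    | base => exact subset_rfl
    | succ k _ ih => exact subset_trans (hRseq k).2 ih
  set γ : ∀ n, Path (e n) (e (n + 1)) := fun n => (hJn n).somePath with hγ
  set α : ℕ → C(I, B) := fun n => p.comp (γ n).toContinuousMap with hα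
  have hαmem : ∀ n, ∀ s : I, α n s ∈ V n := fun n s => (hJn n).somePath_mem s
  have hmatch : ∀ n, α n 1 = α (n + 1) 0 := by
    intro n
    show p (γ n 1) = p (γ (n + 1) 0)
    rw [Path.target, Path.source]
  have hsmall : ∀ W ∈ 𝓝 b₀, ∃ n : ℕ, ∀ x : ℝ, (n : ℝ) ≤ x → fbG α x ∈ W := by
    intro W hW
    obtain ⟨n, -, hn⟩ := hBas.toHasBasis.mem_iff.mp hW
    exact ⟨n, fun x hx => hn (hVBas n (fbG_tail hαmem hanti n x hx))⟩
  set Hc : C(I, B) :=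
    ⟨fun t => fbH b₀ α (t : ℝ), (fbH_continuous hmatch hsmall).comp continuous_subtype_val⟩
    with hHc
  have hHcoe : ∀ t : I, Hc t = fbH b₀ α (t : ℝ) := fun t => rfl
  have hH0 : Hc 0 = p (e 0) := by
    have h1 : ((0 : I) : ℝ) = ((fbScale 0 0 : I) : ℝ) := by
      rw [fbScale_zero, fbT_zero]
    rw [hHcoe, h1, fbH_scale hmatch]
    show p (γ 0 0) = p (e 0)
    rw [Path.source]
  obtain ⟨g, ⟨hg1, hg2⟩, -⟩ := hp (e 0) Hc hH0
  have hpg : ∀ t : I, p (g t) = Hc t := fun t => ContinuousMap.congr_fun hg1 t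
  have hgrid : ∀ n, g (fbT n) = e n := by
    intro n
    induction n with
    | zero => rw [fbT_zero]; exact hg2
    | succ n ih =>
      have hα0' : α n 0 = p (e n) := by
        show p (γ n 0) = p (e n)
        rw [Path.source]
      have h1 : p.comp (g.comp (fbScale n)) = α n ∧ (g.comp (fbScale n)) 0 = e n := by
        constructor
        · ext s
          show p (g (fbScale n s)) = α n s
          rw [hpg (fbScale n s), hHcoe, fbH_scale hmatch]
        · show g (fbScale n 0) = e n
          rw [fbScale_zero, ih]
      have h2 : p.comp (γ n).toContinuousMap = α n ∧ ((γ n).toContinuousMap) 0 = e n :=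
        ⟨rfl, by simp⟩
      have heq := (hp (e n) (α n) hα0').unique h1 h2
      have heval := ContinuousMap.congr_fun heq 1
      have : g (fbScale n 1) = γ n 1 := heval
      rw [fbScale_one] at this
      rw [this, Path.target]
  have heinf : p (g 1) = b₀ := by
    rw [hpg 1, hHcoe]
    exact fbH_one_eq _ (by norm_num)
  have hTmem : ∀ n, g 1 ∈ T n := by
    intro n
    apply hballs n (g 1) heinf
    refine ⟨⟨g.comp (fbClamp n), ?_, ?_⟩, ?_⟩
    · show g (fbClamp n 0) = e n
      rw [fbClamp_zero, hgrid]
    · show g (fbClamp n 1) = g 1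
      rw [fbClamp_one]
    · intro s
      rw [Set.mem_preimage]
      show p (g (fbClamp n s)) ∈ V n
      rw [hpg, hHcoe]
      exact fbH_tail hαmem hanti n (mem_of_mem_nhds (hVnh n)) _ (fbClamp_ge n s)
  refine ⟨⟨g 1, by simp [heinf]⟩, ?_, ?_⟩
  · show (⟨g 1, _⟩ : ↥(p ⁻¹' {b₀})) ∈ U
    rw [← hU']
    exact hTmem 0
  · rw [Set.mem_iInter]
    intro n
    rw [← hUteq n]
    exact hTmem (n + 1)
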